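/- (Zermelo-type theorem) Let G be a finite win or lose extensive game with perfect information for two players. For each player i ∈ {1,2}: player i has a winning strategy if and only if player -i has no winning strategy; i.e., win_i(G) ≠ ∅ iff win_{-i}(G) = ∅. -/

import Mathlib

/-- A finite extensive game with perfect information: a finite rooted tree whose
leaves carry an outcome for each player and whose internal nodes carry the player
to move and a nonempty finite family of children. -/
inductive ExtGame (ι : Type) : Type where
  | leaf : (ι → ℝ) → ExtGame ι
  | node : ι → (m : ℕ) → (Fin (m + 1) → ExtGame ι) → ExtGame ι

namespace ExtGame

variable {ι : Type}

/-- A strategy of player `i`: at every node where it is `i`'s turn, a choice of a child. -/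
def Strategy (i : ι) : ExtGame ι → Type
  | .leaf _ => PUnit
  | .node j m children => (i = j → Fin (m + 1)) × ∀ c : Fin (m + 1), Strategy i (children c)

/-- The outcome (payoff vector) when every player follows his strategy. -/
def outcome : (G : ExtGame ι) → (∀ i, G.Strategy i) → ι → ℝ
  | .leaf o, _ => o
  | .node j _ children, σ =>
      outcome (children ((σ j).1 rfl)) (fun i => (σ i).2 ((σ j).1 rfl))

/-- Nodes of the game tree, identified by the path from the root. -/
inductive Node : ExtGame ι → Type where
  | root (G : ExtGame ι) : Node G
  | child {j : ι} {m : ℕ} {children : Fin (m + 1) → ExtGame ι}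
      (c : Fin (m + 1)) : Node (children c) → Node (.node j m children)

/-- The subgame rooted at a node. -/
def subgameAt : {G : ExtGame ι} → Node G → ExtGame ι
  | _, .root G => G
  | _, .child c v => subgameAt v

/-- The joint strategy of the subgame rooted at `v` induced by a joint strategy. -/
def restrictProfile : {G : ExtGame ι} → (∀ i, G.Strategy i) → (v : Node G) →
    ∀ i, (subgameAt v).Strategy i
  | _, σ, .root _ => σ
  | _, σ, .child c v => restrictProfile (fun i => (σ i).2 c) v

/-- Nash equilibrium of (the strategic form of) an extensive game. -/
def NashEq [DecidableEq ι] (G : ExtGame ι) (σ : ∀ i, G.Strategy i) : Prop :=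
  ∀ (i : ι) (t : G.Strategy i), G.outcome σ i ≥ G.outcome (Function.update σ i t) i

/-- Subgame perfect equilibrium: the induced joint strategy is a Nash equilibrium
in the subgame rooted at every node. -/
def SPE [DecidableEq ι] (G : ExtGame ι) (σ : ∀ i, G.Strategy i) : Prop :=
  ∀ v : Node G, (subgameAt v).NashEq (restrictProfile σ v)

/-- At the root (if it is a non-leaf), the player to move chooses a child whose
subgame outcome (under the induced strategies) is maximal for him. -/
def BestAtRoot : (G : ExtGame ι) → (∀ i, G.Strategy i) → Prop
  | .leaf _, _ => True
  | .node j _ children, σ =>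
      ∀ c, outcome (children ((σ j).1 rfl)) (fun i => (σ i).2 ((σ j).1 rfl)) j ≥
        outcome (children c) (fun i => (σ i).2 c) j

/-- The list of payoff vectors at the leaves of the game tree (one entry per leaf). -/
def leavesList : ExtGame ι → List (ι → ℝ)
  | .leaf o => [o]
  | .node _ _ children => (List.ofFn fun c => leavesList (children c)).flatten

/-- The game is without relevant ties: at every non-leaf node `u` with `turn(u) = i`,
the outcome function of player `i` is injective on the leaves of the subtree rooted at `u`. -/
def NoRelevantTies : ExtGame ι → Prop
  | .leaf _ => True
  | .node j m children =>
      ((ExtGame.node j m children).leavesList.Pairwise fun o o' => o j ≠ o' j) ∧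
      ∀ c, NoRelevantTies (children c)

/-- The player to move at a node (`none` if the node is a leaf). -/
def turnAt {G : ExtGame ι} (v : Node G) : Option ι :=
  match subgameAt v with
  | .leaf _ => none
  | .node j _ _ => some j

end ExtGame


/-- A two-player extensive game (players indexed by `Bool`, the opponent of `i` being `!i`)
is a win or lose game: the only possible outcomes are `(1, -1)` and `(-1, 1)`. -/
def WinOrLose (G : ExtGame Bool) : Prop :=
  ∀ o ∈ G.leavesList, (o false = 1 ∧ o true = -1) ∨ (o false = -1 ∧ o true = 1)

/-- `si` is a winning strategy for player `i`: whatever the opponent plays, the outcome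
for `i` is `1`. -/
def Winning (G : ExtGame Bool) (i : Bool) (si : G.Strategy i) : Prop :=
  ∀ σ : ∀ j, G.Strategy j, σ i = si → G.outcome σ i = 1

namespace ExtGame

/-- A default strategy (always exists). -/
def defStrat {ι : Type} (i : ι) : (G : ExtGame ι) → G.Strategy i
  | .leaf _ => PUnit.unit
  | .node _ _ children => ⟨fun _ => 0, fun c => defStrat i (children c)⟩

theorem mem_leaves_node {ι : Type} {j : ι} {m : ℕ} {children : Fin (m + 1) → ExtGame ι}
    (c : Fin (m + 1)) {o : ι → ℝ} (ho : o ∈ leavesList (children c)) :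
    o ∈ leavesList (ExtGame.node j m children) := by
  simp only [leavesList, List.mem_flatten, List.mem_ofFn]
  exact ⟨_, ⟨c, rfl⟩, ho⟩

theorem outcome_mem {ι : Type} : ∀ (G : ExtGame ι) (σ : ∀ i, G.Strategy i),
    G.outcome σ ∈ G.leavesList
  | .leaf o, _ => by simp [outcome, leavesList]
  | .node j m children, σ => mem_leaves_node _ (outcome_mem _ _)

end ExtGame

theorem winOrLose_child {j : Bool} {m : ℕ} {children : Fin (m + 1) → ExtGame Bool}
    (h : WinOrLose (ExtGame.node j m children)) (c : Fin (m + 1)) :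
    WinOrLose (children c) :=
  fun o ho => h o (ExtGame.mem_leaves_node c ho)

theorem not_both_win {G : ExtGame Bool} (h : WinOrLose G) {i : Bool}
    {si : G.Strategy i} (hi : Winning G i si) {s' : G.Strategy (!i)}
    (h' : Winning G (!i) s') : False := by
  cases i with
  | false =>
    let σ : ∀ j, G.Strategy j := fun j => Bool.rec si s' j
    have h1 := hi σ rfl
    have h2 := h' σ rfl
    rcases h (G.outcome σ) (ExtGame.outcome_mem G σ) with ⟨a, b⟩ | ⟨a, b⟩ <;>
      simp_all <;> linarith
  | true =>
    let σ : ∀ j, G.Strategy j := fun j => Bool.rec s' si j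
    have h1 := hi σ rfl
    have h2 := h' σ rfl
    rcases h (G.outcome σ) (ExtGame.outcome_mem G σ) with ⟨a, b⟩ | ⟨a, b⟩ <;>
      simp_all <;> linarith

theorem determined : ∀ (G : ExtGame Bool), WinOrLose G → ∀ i : Bool,
    (∃ s : G.Strategy i, Winning G i s) ∨ (∃ s : G.Strategy (!i), Winning G (!i) s) := by
  intro G
  induction G with
  | leaf o =>
    intro h i
    rcases h o (by simp [ExtGame.leavesList]) with ⟨a, b⟩ | ⟨a, b⟩ <;> cases i
    · exact Or.inl ⟨PUnit.unit, fun σ _ => a⟩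
    · exact Or.inr ⟨PUnit.unit, fun σ _ => a⟩
    · exact Or.inr ⟨PUnit.unit, fun σ _ => b⟩
    · exact Or.inl ⟨PUnit.unit, fun σ _ => b⟩
  | node j m children ih =>
    intro h i
    have key : (∃ s : (ExtGame.node j m children).Strategy j,
        Winning (ExtGame.node j m children) j s) ∨
        (∃ s : (ExtGame.node j m children).Strategy (!j),
        Winning (ExtGame.node j m children) (!j) s) := by
      by_cases hc : ∃ c, ∃ s : (children c).Strategy j, Winning (children c) j s
      · obtain ⟨c, s, hs⟩ := hc
        refine Or.inl ⟨⟨fun _ => c, fun c' =>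
          if hcc : c = c' then hcc ▸ s else ExtGame.defStrat j (children c')⟩, ?_⟩
        intro σ hσ
        have : (ExtGame.node j m children).outcome σ j =
            ExtGame.outcome (children ((σ j).1 rfl)) (fun i => (σ i).2 ((σ j).1 rfl)) j := rfl
        rw [this, hσ]
        exact hs _ (by simp [hσ])
      · push_neg at hc
        have hall : ∀ c, ∃ s : (children c).Strategy (!j), Winning (children c) (!j) s := by
          intro c
          rcases ih c (winOrLose_child h c) j with ⟨s, hs⟩ | hw
          · exact absurd hs (hc c s)
          · exact hw
        choose sc hsc using hall
        refine Or.inr ⟨⟨fun _ => 0, sc⟩, ?_⟩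
        intro σ hσ
        have : (ExtGame.node j m children).outcome σ (!j) =
            ExtGame.outcome (children ((σ j).1 rfl)) (fun i => (σ i).2 ((σ j).1 rfl)) (!j) := rfl
        rw [this]
        exact hsc ((σ j).1 rfl) _ (by rw [hσ])
    cases i <;> cases j <;> first
      | simpa using key
      | exact key.symm

/-- (Zermelo-type theorem) In a finite win or lose extensive game with perfect information,
for each player `i`: player `i` has a winning strategy iff his opponent has none. -/
theorem win_iff_opponent_no_win (G : ExtGame Bool) (h : WinOrLose G) (i : Bool) :
    (∃ si : G.Strategy i, Winning G i si) ↔ ¬ ∃ s' : G.Strategy (!i), Winning G (!i) s' := by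
  constructor
  · rintro ⟨si, hsi⟩ ⟨s', hs'⟩
    exact not_both_win h hsi hs'
  · intro hno
    rcases determined G h i with hw | hw
    · exact hw
    · exact absurd hw hno
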